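/- Let N = 2m+1 ≥ 3 be odd, α ≥ 0, h ∈ ℝ. With H, σ_i^x, σ_i^z, 𝒩_α, ε, U as in the context, let ρ = U D U for some diagonal matrix D, let a_1,…,a_N be real numbers and A = ∑_{i=1}^N a_i σ_i^x. Then for every t ∈ ℝ, Tr(exp(−i t H) · A · exp(i t H) · ρ) = cos(2 h t) · (∏_{j=1}^{m} cos²(2 𝒩_α ε(j) t)) · Tr(A ρ). -/

import Mathlib

open Matrix

/-- Coupling constants `ε(j) = j^{−α}`. -/
noncomputable def eps (α : ℝ) (j : ℕ) : ℝ := (j : ℝ) ^ (-α)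

/-- Kac normalization `𝒩_α = (2 ∑_{j=1}^{m} ε(j))⁻¹` for the odd ring `N = 2m+1`. -/
noncomputable def kacNorm (α : ℝ) (m : ℕ) : ℝ :=
  (2 * ∑ j ∈ Finset.Icc 1 m, eps α j)⁻¹

/-- `σ_i^z`: diagonal matrix with entry `(−1)^{s i}` at configuration `s : Fin (2m+1) → Bool`. -/
noncomputable def sigmaZ (m : ℕ) (i : Fin (2 * m + 1)) :
    Matrix (Fin (2 * m + 1) → Bool) (Fin (2 * m + 1) → Bool) ℂ :=
  Matrix.diagonal fun s => if s i then -1 else 1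

/-- `σ_i^x`: permutation matrix flipping the `i`-th bit. -/
noncomputable def sigmaX (m : ℕ) (i : Fin (2 * m + 1)) :
    Matrix (Fin (2 * m + 1) → Bool) (Fin (2 * m + 1) → Bool) ℂ :=
  fun s s' => if s' = Function.update s i (! s i) then 1 else 0

/-- `U`: the `N`-fold Kronecker product of the Hadamard matrix `(1/√2)[[1,1],[1,−1]]`. -/
noncomputable def hadamardU (m : ℕ) :
    Matrix (Fin (2 * m + 1) → Bool) (Fin (2 * m + 1) → Bool) ℂ :=
  fun s s' => ∏ i : Fin (2 * m + 1),
    (((Real.sqrt 2)⁻¹ : ℝ) : ℂ) * (if s i && s' i then -1 else 1)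

open Fin.NatCast in
/-- Emch–Radin Hamiltonian
`H = 𝒩_α ∑_{i=1}^N ∑_{j=1}^m ε(j) σ_i^z σ_{(i+j) mod N}^z − h ∑_i σ_i^z` on the odd ring
`N = 2m+1` (indices mod `N`). -/
noncomputable def Ham (α h : ℝ) (m : ℕ) :
    Matrix (Fin (2 * m + 1) → Bool) (Fin (2 * m + 1) → Bool) ℂ :=
  ((kacNorm α m : ℝ) : ℂ) • ∑ i : Fin (2 * m + 1), ∑ j ∈ Finset.Icc 1 m,
      ((eps α j : ℝ) : ℂ) • (sigmaZ m i * sigmaZ m (i + (j : Fin (2 * m + 1))))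
    - ((h : ℝ) : ℂ) • ∑ i : Fin (2 * m + 1), sigmaZ m i

namespace ER

open Fin.NatCast

noncomputable def zC (b : Bool) : ℂ := if b then -1 else 1

lemma zC_sq (b : Bool) : zC b * zC b = 1 := by cases b <;> simp [zC]
lemma zC_not (b : Bool) : zC (!b) = - zC b := by cases b <;> simp [zC]

noncomputable def En (α h : ℝ) (m : ℕ) (s : Fin (2*m+1) → Bool) : ℂ :=
  (kacNorm α m : ℂ) * ∑ i : Fin (2*m+1), ∑ j ∈ Finset.Icc 1 m,
      (eps α j : ℂ) * (zC (s i) * zC (s (i + (j : Fin (2*m+1)))))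
    - (h : ℂ) * ∑ i : Fin (2*m+1), zC (s i)

lemma sigmaZ_eq (m : ℕ) (i : Fin (2*m+1)) :
    sigmaZ m i = Matrix.diagonal (fun s => zC (s i)) := rfl

lemma diagonal_sum {ι n R : Type*} [DecidableEq n] [Fintype n] [AddCommMonoid R]
    (s : Finset ι) (f : ι → n → R) :
    Matrix.diagonal (∑ i ∈ s, f i) = ∑ i ∈ s, Matrix.diagonal (f i) :=
  map_sum (Matrix.diagonalAddMonoidHom n R) f s

lemma ham_diag (α h : ℝ) (m : ℕ) : Ham α h m = Matrix.diagonal (En α h m) := by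
  unfold Ham
  simp only [sigmaZ_eq, diagonal_mul_diagonal, ← Matrix.diagonal_smul, ← diagonal_sum,
    ← Matrix.diagonal_sub]
  ext s j
  by_cases hsj : s = j
  · subst hsj
    simp [Matrix.sub_apply, Matrix.smul_apply, Matrix.diagonal_apply_eq, En, smul_eq_mul,
      Finset.sum_apply, Pi.smul_apply, Finset.mul_sum]
  · simp [Matrix.sub_apply, Matrix.smul_apply, Matrix.diagonal_apply_ne _ hsj]

lemma exp_ham (α h : ℝ) (m : ℕ) (c : ℂ) :
    NormedSpace.exp (c • Ham α h m) =
      Matrix.diagonal (fun s => Complex.exp (c * En α h m s)) := by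
  rw [ham_diag, ← Matrix.diagonal_smul, Matrix.exp_diagonal]
  rw [Pi.exp_def]
  refine congrArg Matrix.diagonal (funext fun s => ?_)
  rw [Pi.smul_apply, smul_eq_mul, ← Complex.exp_eq_exp_ℂ]

variable {m : ℕ}

abbrev Kc (m : ℕ) := Fin (2 * m + 1) → Bool

noncomputable def flp (i : Fin (2*m+1)) (s : Kc m) : Kc m := Function.update s i (!s i)

lemma tr4 (p q : Kc m → ℂ) (M ρ : Matrix (Kc m) (Kc m) ℂ) :
    Matrix.trace (Matrix.diagonal p * M * Matrix.diagonal q * ρ) =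
      ∑ x : Kc m, ∑ y : Kc m, p x * M x y * q y * ρ y x := by
  have h1 : ∀ x y, (Matrix.diagonal p * M * Matrix.diagonal q) x y = p x * M x y * q y := by
    intro x y; rw [Matrix.mul_diagonal, Matrix.diagonal_mul]
  calc Matrix.trace (Matrix.diagonal p * M * Matrix.diagonal q * ρ)
      = ∑ x : Kc m, ∑ y : Kc m, (Matrix.diagonal p * M * Matrix.diagonal q) x y * ρ y x := by
        simp [Matrix.trace, Matrix.mul_apply, Matrix.diag]
    _ = _ := by simp_rw [h1]

lemma trace_main (p q : Kc m → ℂ) (ρ : Matrix (Kc m) (Kc m) ℂ) (a : Fin (2*m+1) → ℝ) :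
    Matrix.trace (Matrix.diagonal p * (∑ i : Fin (2*m+1), ((a i : ℝ) : ℂ) • sigmaX m i) *
        Matrix.diagonal q * ρ) =
      ∑ i : Fin (2*m+1), (a i : ℂ) *
        ∑ s : Kc m, p s * q (flp i s) * ρ (flp i s) s := by
  rw [tr4]
  have hM : ∀ x y : Kc m, (∑ i : Fin (2*m+1), ((a i : ℝ) : ℂ) • sigmaX m i) x y
      = ∑ i : Fin (2*m+1), (a i : ℂ) * (if y = flp i x then 1 else 0) := by
    intro x y
    simp [Matrix.sum_apply, sigmaX, flp]
    exact Finset.sum_congr rfl fun i _ => by by_cases hy : y = Function.update x i (!x i) <;> simp [hy]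
  simp_rw [hM, Finset.mul_sum, Finset.sum_mul]
  refine Eq.trans (Finset.sum_congr rfl fun x _ => Finset.sum_comm) ?_
  rw [Finset.sum_comm]
  refine Finset.sum_congr rfl fun i _ => ?_
  refine Finset.sum_congr rfl fun x _ => ?_
  rw [Finset.sum_eq_single (flp i x)]
  · rw [if_pos rfl]; ring
  · intro y _ hy
    rw [if_neg hy]; ring
  · simp

lemma U_mul_U (i : Fin (2*m+1)) (s k : Kc m) :
    hadamardU m (flp i s) k * hadamardU m k s = (2:ℂ)⁻¹ ^ (2*m+1) * zC (k i) := by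
  unfold hadamardU
  rw [← Finset.prod_mul_distrib]
  have key : ∀ i' : Fin (2*m+1),
      ((((Real.sqrt 2)⁻¹ : ℝ) : ℂ) * (if (flp i s) i' && k i' then -1 else 1)) *
        ((((Real.sqrt 2)⁻¹ : ℝ) : ℂ) * (if k i' && s i' then -1 else 1))
      = (2:ℂ)⁻¹ * (if i' = i then zC (k i) else 1) := by
    intro i'
    have hc2 : ((((Real.sqrt 2)⁻¹ : ℝ) : ℂ)) * (((Real.sqrt 2)⁻¹ : ℝ) : ℂ) = (2:ℂ)⁻¹ := by
      rw [← Complex.ofReal_mul, ← mul_inv, Real.mul_self_sqrt (by norm_num : (0:ℝ) ≤ 2)]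
      norm_num
    by_cases hii : i' = i
    · subst hii
      have hfs : flp i' s i' = !s i' := by simp [flp]
      rw [hfs, if_pos rfl]
      cases hk : k i' <;> cases hs : s i' <;> simp [zC, hk, hs] <;>
        · rw [← hc2]; push_cast; ring
    · have hfs : flp i s i' = s i' := by simp [flp, Function.update_of_ne hii]
      rw [hfs, if_neg hii]
      cases hk : k i' <;> cases hs : s i' <;> simp [hk, hs] <;>
        · rw [← hc2]; push_cast; ring
  calc (∏ i' : Fin (2*m+1),
        ((((Real.sqrt 2)⁻¹ : ℝ) : ℂ) * (if (flp i s) i' && k i' then -1 else 1)) *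
          ((((Real.sqrt 2)⁻¹ : ℝ) : ℂ) * (if k i' && s i' then -1 else 1)))
      = ∏ i' : Fin (2*m+1), (2:ℂ)⁻¹ * (if i' = i then zC (k i) else 1) :=
        Finset.prod_congr rfl fun i' _ => key i'
    _ = (2:ℂ)⁻¹ ^ (2*m+1) * zC (k i) := by
        rw [Finset.prod_mul_distrib, Finset.prod_const, Finset.prod_ite_eq']
        simp

lemma rho_entry (D : Matrix (Kc m) (Kc m) ℂ) (hD : D.IsDiag) (i : Fin (2*m+1)) (s : Kc m) :
    (hadamardU m * D * hadamardU m) (flp i s) s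
      = (2:ℂ)⁻¹ ^ (2*m+1) * ∑ k : Kc m, D k k * zC (k i) := by
  rw [Matrix.mul_apply]
  have h1 : ∀ k' : Kc m, (hadamardU m * D) (flp i s) k'
      = hadamardU m (flp i s) k' * D k' k' := by
    intro k'
    rw [Matrix.mul_apply, Finset.sum_eq_single k']
    · intro b _ hb; rw [hD hb, mul_zero]
    · simp
  simp_rw [h1]
  rw [Finset.mul_sum]
  refine Finset.sum_congr rfl fun k _ => ?_
  calc hadamardU m (flp i s) k * D k k * hadamardU m k s
      = (hadamardU m (flp i s) k * hadamardU m k s) * D k k := by ring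
    _ = _ := by rw [U_mul_U]; ring

lemma jval {j : ℕ} (hj2 : j ≤ m) : ((j : Fin (2*m+1)) : ℕ) = j :=
  Fin.val_cast_of_lt (by omega)

lemma jne {j : ℕ} (hj1 : 1 ≤ j) (hj2 : j ≤ m) : (j : Fin (2*m+1)) ≠ 0 := by
  intro hc
  have := congrArg Fin.val hc
  rw [jval hj2] at this
  simp at this
  omega

lemma negj {j : ℕ} (hj2 : j ≤ m) :
    ((2*m+1-j : ℕ) : Fin (2*m+1)) = -(j : Fin (2*m+1)) := by
  have h0 : ((2*m+1 : ℕ) : Fin (2*m+1)) = 0 := by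
    exact_mod_cast Fin.natCast_self (2*m+1)
  rw [eq_neg_iff_add_eq_zero, ← Nat.cast_add, Nat.sub_add_cancel (by omega), h0]

lemma negjval {j : ℕ} (hj1 : 1 ≤ j) (hj2 : j ≤ m) :
    ((-(j : Fin (2*m+1)) : Fin (2*m+1)) : ℕ) = 2*m+1-j := by
  rw [← negj hj2]
  exact Fin.val_cast_of_lt (by omega)

lemma add_j_ne {j : ℕ} (hj1 : 1 ≤ j) (hj2 : j ≤ m) (i : Fin (2*m+1)) :
    i + (j : Fin (2*m+1)) ≠ i := by
  intro hc
  exact jne hj1 hj2 (by rwa [add_eq_left] at hc)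

lemma sub_j_ne {j : ℕ} (hj1 : 1 ≤ j) (hj2 : j ≤ m) (i : Fin (2*m+1)) :
    i - (j : Fin (2*m+1)) ≠ i := by
  intro hc
  exact jne hj1 hj2 (by rwa [sub_eq_self] at hc)

lemma prod_ring (f : Fin (2*m+1) → ℂ) (i : Fin (2*m+1)) :
    ∏ k : Fin (2*m+1), f k
      = f i * ∏ j ∈ Finset.Icc 1 m, (f (i + (j : Fin (2*m+1))) * f (i - (j : Fin (2*m+1)))) := by
  classical
  have e1 : ∏ k : Fin (2*m+1), f k = ∏ d : Fin (2*m+1), f (i + d) :=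
    (Fintype.prod_equiv (Equiv.addLeft i) (fun d => f (i + d)) f (fun d => rfl)).symm
  set F : ℕ → ℂ := fun x => f (i + (x : Fin (2*m+1))) with hF
  have e2 : ∏ d : Fin (2*m+1), f (i + d) = ∏ x ∈ Finset.range (2*m+1), F x := by
    rw [← Fin.prod_univ_eq_prod_range F (2*m+1)]
    exact Finset.prod_congr rfl fun d _ => by rw [hF]; simp [Fin.cast_val_eq_self]
  have hsplit : 2*m+1 = (m+1)+m := by omega
  have e3 : ∏ x ∈ Finset.range (2*m+1), F x
      = (∏ x ∈ Finset.range (m+1), F x) * ∏ x ∈ Finset.range m, F (m+1+x) := by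
    rw [hsplit, Finset.prod_range_add]
  have e4 : ∏ x ∈ Finset.range (m+1), F x
      = (∏ x ∈ Finset.range m, F (x+1)) * F 0 := Finset.prod_range_succ' F m
  have e5 : ∏ x ∈ Finset.range m, F (x+1) = ∏ j ∈ Finset.Icc 1 m, F j := by
    rw [show Finset.Icc 1 m = Finset.Ico 1 (m+1) by rfl, Finset.prod_Ico_eq_prod_range]
    simp [add_comm]
  have e6 : ∏ x ∈ Finset.range m, F (m+1+x) = ∏ j ∈ Finset.Icc 1 m, F (2*m+1-j) := by
    rw [show Finset.Icc 1 m = Finset.Ico 1 (m+1) by rfl, Finset.prod_Ico_eq_prod_range]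
    rw [← Finset.prod_range_reflect (fun x => F (m+1+x)) m]
    refine Finset.prod_congr (by simp) fun x hx => ?_
    have hxm : x < m := Finset.mem_range.mp hx
    congr 1
    omega
  have hF0 : F 0 = f i := by rw [hF]; simp
  have hFj : ∀ j ∈ Finset.Icc 1 m, F j = f (i + (j : Fin (2*m+1))) := fun j _ => rfl
  have hFnj : ∀ j ∈ Finset.Icc 1 m, F (2*m+1-j) = f (i - (j : Fin (2*m+1))) := by
    intro j hj
    obtain ⟨hj1, hj2⟩ := Finset.mem_Icc.mp hj
    rw [hF]
    simp only [negj hj2, sub_eq_add_neg]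
  rw [e1, e2, e3, e4, e5]
  rw [Finset.prod_congr rfl hFnj] at e6
  rw [e6, hF0, Finset.prod_congr rfl hFj, Finset.prod_mul_distrib]
  ring

lemma flp_self (i : Fin (2*m+1)) (s : Kc m) : flp i s i = !s i := by simp [flp]
lemma flp_other (i k : Fin (2*m+1)) (s : Kc m) (hk : k ≠ i) : flp i s k = s k := by
  simp [flp, Function.update_of_ne hk]

lemma delta (α h : ℝ) (i : Fin (2*m+1)) (s : Kc m) :
    En α h m (flp i s) - En α h m s
      = -2 * zC (s i) * ((kacNorm α m : ℂ) *
          ∑ j ∈ Finset.Icc 1 m, (eps α j : ℂ) *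
            (zC (s (i + (j : Fin (2*m+1)))) + zC (s (i - (j : Fin (2*m+1))))) - (h : ℂ)) := by
  have hL : (∑ i' : Fin (2*m+1), zC (flp i s i')) - ∑ i' : Fin (2*m+1), zC (s i')
      = -2 * zC (s i) := by
    rw [← Finset.sum_sub_distrib, Finset.sum_eq_single i]
    · rw [flp_self, zC_not]; ring
    · intro i' _ hi'
      rw [flp_other i i' s hi', sub_self]
    · simp
  have hT : (∑ i' : Fin (2*m+1), ∑ j ∈ Finset.Icc 1 m,
        (eps α j : ℂ) * (zC (flp i s i') * zC (flp i s (i' + (j : Fin (2*m+1))))))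
      - (∑ i' : Fin (2*m+1), ∑ j ∈ Finset.Icc 1 m,
        (eps α j : ℂ) * (zC (s i') * zC (s (i' + (j : Fin (2*m+1))))))
      = -2 * zC (s i) * ∑ j ∈ Finset.Icc 1 m, (eps α j : ℂ) *
            (zC (s (i + (j : Fin (2*m+1)))) + zC (s (i - (j : Fin (2*m+1))))) := by
    rw [Finset.sum_comm, Finset.sum_comm (f := fun i' j => (eps α j : ℂ) * (zC (s i') * zC (s (i' + (j : Fin (2*m+1))))))]
    rw [← Finset.sum_sub_distrib, Finset.mul_sum]
    refine Finset.sum_congr rfl fun j hj => ?_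
    obtain ⟨hj1, hj2⟩ := Finset.mem_Icc.mp hj
    rw [← Finset.sum_sub_distrib]
    set G : Fin (2*m+1) → ℂ := fun i' =>
      (eps α j : ℂ) * (zC (flp i s i') * zC (flp i s (i' + (j : Fin (2*m+1)))))
        - (eps α j : ℂ) * (zC (s i') * zC (s (i' + (j : Fin (2*m+1))))) with hG
    have hpair : ∑ i' : Fin (2*m+1), G i'
        = G i + G (i - (j : Fin (2*m+1))) := by
      rw [← Finset.sum_pair (Ne.symm (sub_j_ne hj1 hj2 i))]
      refine (Finset.sum_subset (Finset.subset_univ _) ?_).symm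
      intro x _ hx
      rw [Finset.mem_insert, Finset.mem_singleton] at hx
      push_neg at hx
      obtain ⟨hx1, hx2⟩ := hx
      have hx3 : x + (j : Fin (2*m+1)) ≠ i := by
        intro hc
        exact hx2 (eq_sub_of_add_eq hc)
      rw [hG]
      simp only [flp_other i x s hx1, flp_other i _ s hx3, sub_self]
    rw [hpair]
    simp only [hG]
    have h1 : flp i s i = !s i := flp_self i s
    have h2 : flp i s (i + (j : Fin (2*m+1))) = s (i + (j : Fin (2*m+1))) :=
      flp_other i _ s (add_j_ne hj1 hj2 i)
    have h3 : flp i s (i - (j : Fin (2*m+1))) = s (i - (j : Fin (2*m+1))) :=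
      flp_other i _ s (sub_j_ne hj1 hj2 i)
    have h4 : i - (j : Fin (2*m+1)) + (j : Fin (2*m+1)) = i := sub_add_cancel i _
    simp only [h4, h1, h2, h3, zC_not]
    ring
  unfold En
  linear_combination (kacNorm α m : ℂ) * hT - (h : ℂ) * hL

lemma zC_xor (a b : Bool) : zC (xor a b) = zC a * zC b := by
  cases a <;> cases b <;> simp [zC]

noncomputable def Phi (i : Fin (2*m+1)) (s : Kc m) : Kc m :=
  fun k => if k = i then s i else xor (s i) (s k)

lemma Phi_invol (i : Fin (2*m+1)) : Function.Involutive (Phi (m := m) i) := by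
  intro s
  funext k
  by_cases hk : k = i
  · simp [Phi, hk]
  · simp [Phi, hk]

lemma Phi_at (i : Fin (2*m+1)) (s : Kc m) : Phi i s i = s i := by simp [Phi]

lemma zC_Phi (i k : Fin (2*m+1)) (s : Kc m) (hk : k ≠ i) :
    zC (Phi i s k) = zC (s i) * zC (s k) := by
  simp [Phi, hk, zC_xor]

noncomputable def dst (i k : Fin (2*m+1)) : ℕ :=
  if ((k - i : Fin (2*m+1)) : ℕ) ≤ m then ((k - i : Fin (2*m+1)) : ℕ)
  else 2*m+1 - ((k - i : Fin (2*m+1)) : ℕ)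

lemma dst_add {j : ℕ} (hj1 : 1 ≤ j) (hj2 : j ≤ m) (i : Fin (2*m+1)) :
    dst i (i + (j : Fin (2*m+1))) = j := by
  unfold dst
  have h1 : i + (j : Fin (2*m+1)) - i = (j : Fin (2*m+1)) := by rw [add_sub_cancel_left]
  rw [h1, jval hj2, if_pos hj2]

lemma dst_sub {j : ℕ} (hj1 : 1 ≤ j) (hj2 : j ≤ m) (i : Fin (2*m+1)) :
    dst i (i - (j : Fin (2*m+1))) = j := by
  unfold dst
  have h1 : i - (j : Fin (2*m+1)) - i = -(j : Fin (2*m+1)) := by rw [sub_sub_cancel_left]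
  rw [h1, negjval hj1 hj2, if_neg (by omega)]
  omega

noncomputable def gfun (α hr t : ℝ) (m : ℕ) (i k : Fin (2*m+1)) (b : Bool) : ℂ :=
  if k = i then Complex.exp (Complex.I * (2*(hr:ℂ)*(t:ℂ)) * zC b)
  else Complex.exp (-(Complex.I * (2*(kacNorm α m : ℂ)*(eps α (dst i k) : ℂ)*(t:ℂ))) * zC b)

noncomputable def Gfun (α hr t : ℝ) (m : ℕ) (i : Fin (2*m+1)) (u : Kc m) : ℂ :=
  Complex.exp (Complex.I * (2*(hr:ℂ)*(t:ℂ)) * zC (u i)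
    - ∑ j ∈ Finset.Icc 1 m, Complex.I * (2*(kacNorm α m : ℂ)*(eps α j : ℂ)*(t:ℂ)) *
        (zC (u (i + (j : Fin (2*m+1)))) + zC (u (i - (j : Fin (2*m+1))))))

lemma step1 (α hr t : ℝ) (i : Fin (2*m+1)) (s : Kc m) :
    Complex.exp ((-(Complex.I * (t:ℂ))) * En α hr m s) *
      Complex.exp ((Complex.I * (t:ℂ)) * En α hr m (flp i s))
      = Gfun α hr t m i (Phi i s) := by
  rw [← Complex.exp_add]
  unfold Gfun
  congr 1
  have hsum : ∑ j ∈ Finset.Icc 1 m, Complex.I * (2*(kacNorm α m : ℂ)*(eps α j : ℂ)*(t:ℂ)) *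
        (zC (Phi i s (i + (j : Fin (2*m+1)))) + zC (Phi i s (i - (j : Fin (2*m+1)))))
      = (Complex.I * (t:ℂ) * (2 * zC (s i)) * (kacNorm α m : ℂ)) *
          ∑ j ∈ Finset.Icc 1 m, (eps α j : ℂ) *
            (zC (s (i + (j : Fin (2*m+1)))) + zC (s (i - (j : Fin (2*m+1))))) := by
    rw [Finset.mul_sum]
    refine Finset.sum_congr rfl fun j hj => ?_
    obtain ⟨hj1, hj2⟩ := Finset.mem_Icc.mp hj
    rw [zC_Phi i _ s (add_j_ne hj1 hj2 i), zC_Phi i _ s (sub_j_ne hj1 hj2 i)]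
    ring
  rw [hsum, Phi_at]
  linear_combination Complex.I * (t:ℂ) * delta α hr i s

lemma step3 (α hr t : ℝ) (i : Fin (2*m+1)) (u : Kc m) :
    Gfun α hr t m i u = ∏ k : Fin (2*m+1), gfun α hr t m i k (u k) := by
  rw [prod_ring (fun k => gfun α hr t m i k (u k)) i]
  have hgi : gfun α hr t m i i (u i) = Complex.exp (Complex.I * (2*(hr:ℂ)*(t:ℂ)) * zC (u i)) := by
    unfold gfun; rw [if_pos rfl]
  have hprod : ∏ j ∈ Finset.Icc 1 m,
      (gfun α hr t m i (i + (j : Fin (2*m+1))) (u (i + (j : Fin (2*m+1)))) *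
        gfun α hr t m i (i - (j : Fin (2*m+1))) (u (i - (j : Fin (2*m+1)))))
      = ∏ j ∈ Finset.Icc 1 m, Complex.exp
          (-(Complex.I * (2*(kacNorm α m : ℂ)*(eps α j : ℂ)*(t:ℂ)) *
            (zC (u (i + (j : Fin (2*m+1)))) + zC (u (i - (j : Fin (2*m+1))))))) := by
    refine Finset.prod_congr rfl fun j hj => ?_
    obtain ⟨hj1, hj2⟩ := Finset.mem_Icc.mp hj
    unfold gfun
    rw [if_neg (add_j_ne hj1 hj2 i), if_neg (sub_j_ne hj1 hj2 i),
      dst_add hj1 hj2 i, dst_sub hj1 hj2 i, ← Complex.exp_add]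
    congr 1
    ring
  rw [hgi, hprod, ← Complex.exp_sum, ← Complex.exp_add]
  unfold Gfun
  congr 1
  rw [sub_eq_add_neg, ← Finset.sum_neg_distrib]

lemma step4 (α hr t : ℝ) (i : Fin (2*m+1)) :
    ∑ u : Kc m, ∏ k : Fin (2*m+1), gfun α hr t m i k (u k)
      = ∏ k : Fin (2*m+1), ∑ b : Bool, gfun α hr t m i k b := by
  rw [Finset.prod_univ_sum]
  rw [Fintype.piFinset_univ]

lemma phase_sum (α hr t : ℝ) (i : Fin (2*m+1)) :
    ∑ s : Kc m, Complex.exp ((-(Complex.I * (t:ℂ))) * En α hr m s) *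
        Complex.exp ((Complex.I * (t:ℂ)) * En α hr m (flp i s))
      = (2:ℂ)^(2*m+1) *
        ((Real.cos (2 * hr * t) *
          ∏ j ∈ Finset.Icc 1 m, Real.cos (2 * kacNorm α m * eps α j * t) ^ 2 : ℝ) : ℂ) := by
  have h1 : ∀ s : Kc m, Complex.exp ((-(Complex.I * (t:ℂ))) * En α hr m s) *
      Complex.exp ((Complex.I * (t:ℂ)) * En α hr m (flp i s)) = Gfun α hr t m i (Phi i s) :=
    step1 α hr t i
  rw [Finset.sum_congr rfl fun s _ => h1 s]
  rw [Fintype.sum_bijective (Phi i) (Phi_invol i).bijective _ _ (fun s => rfl)]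
  rw [Finset.sum_congr rfl fun u _ => step3 α hr t i u]
  rw [step4]
  rw [prod_ring (fun k => ∑ b : Bool, gfun α hr t m i k b) i]
  have hci : ∑ b : Bool, gfun α hr t m i i b = 2 * ((Real.cos (2*hr*t) : ℝ) : ℂ) := by
    rw [Fintype.sum_bool]
    unfold gfun
    rw [if_pos rfl, if_pos rfl]
    have e1 : Complex.I * (2*(hr:ℂ)*(t:ℂ)) * zC true = -((2*hr*t : ℝ):ℂ) * Complex.I := by
      simp [zC]; push_cast; ring
    have e2 : Complex.I * (2*(hr:ℂ)*(t:ℂ)) * zC false = ((2*hr*t : ℝ):ℂ) * Complex.I := by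
      simp [zC]; push_cast; ring
    rw [e1, e2, Complex.ofReal_cos, add_comm, ← Complex.two_cos]
  have hcj : ∀ j ∈ Finset.Icc 1 m,
      (∑ b : Bool, gfun α hr t m i (i + (j : Fin (2*m+1))) b) *
        (∑ b : Bool, gfun α hr t m i (i - (j : Fin (2*m+1))) b)
      = 4 * ((Real.cos (2 * kacNorm α m * eps α j * t) : ℝ) : ℂ)^2 := by
    intro j hj
    obtain ⟨hj1, hj2⟩ := Finset.mem_Icc.mp hj
    have hb : ∀ k : Fin (2*m+1), k ≠ i → dst i k = j →
        ∑ b : Bool, gfun α hr t m i k b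
          = 2 * ((Real.cos (2 * kacNorm α m * eps α j * t) : ℝ) : ℂ) := by
      intro k hk hdk
      rw [Fintype.sum_bool]
      unfold gfun
      rw [if_neg hk, if_neg hk, hdk]
      have e1 : -(Complex.I * (2*(kacNorm α m : ℂ)*(eps α j : ℂ)*(t:ℂ))) * zC true
          = ((2 * kacNorm α m * eps α j * t : ℝ):ℂ) * Complex.I := by
        simp [zC]; push_cast; ring
      have e2 : -(Complex.I * (2*(kacNorm α m : ℂ)*(eps α j : ℂ)*(t:ℂ))) * zC false
          = -((2 * kacNorm α m * eps α j * t : ℝ):ℂ) * Complex.I := by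
        simp [zC]; push_cast; ring
      rw [e1, e2, Complex.ofReal_cos, ← Complex.two_cos]
    rw [hb _ (add_j_ne hj1 hj2 i) (dst_add hj1 hj2 i),
      hb _ (sub_j_ne hj1 hj2 i) (dst_sub hj1 hj2 i)]
    ring
  rw [hci, Finset.prod_congr rfl hcj]
  rw [Finset.prod_mul_distrib, Finset.prod_const, Nat.card_Icc]
  push_cast [Complex.ofReal_prod]
  have h4 : (4:ℂ)^m = 2^(2*m) := by
    rw [show (4:ℂ) = 2^2 by norm_num, ← pow_mul]
  rw [h4, pow_succ]
  ring

end ER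

/-- exact time evolution. For `N = 2m+1 ≥ 3` odd, `α ≥ 0`, `h ∈ ℝ`, an initial
state `ρ = U D U` with `D` diagonal, and `A = ∑_i a_i σ_i^x`, one has for all real `t`
`Tr(e^{−itH} A e^{itH} ρ) = cos(2ht) ⬝ ∏_{j=1}^m cos²(2 𝒩_α ε(j) t) ⬝ Tr(A ρ)`. -/
theorem stmt_0 (m : ℕ) (hm : 1 ≤ m) (α : ℝ) (hα : 0 ≤ α) (h : ℝ)
    (D : Matrix (Fin (2 * m + 1) → Bool) (Fin (2 * m + 1) → Bool) ℂ) (hD : D.IsDiag)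
    (a : Fin (2 * m + 1) → ℝ) (t : ℝ) :
    Matrix.trace
      (NormedSpace.exp ((-(Complex.I * (t : ℂ))) • Ham α h m) *
        (∑ i : Fin (2 * m + 1), ((a i : ℝ) : ℂ) • sigmaX m i) *
        NormedSpace.exp ((Complex.I * (t : ℂ)) • Ham α h m) *
        (hadamardU m * D * hadamardU m)) =
      ((Real.cos (2 * h * t) *
          ∏ j ∈ Finset.Icc 1 m, Real.cos (2 * kacNorm α m * eps α j * t) ^ 2 : ℝ) : ℂ) *
        Matrix.trace
          ((∑ i : Fin (2 * m + 1), ((a i : ℝ) : ℂ) • sigmaX m i) *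
            (hadamardU m * D * hadamardU m)) := by
  classical
  set C : ℂ := ((Real.cos (2 * h * t) *
      ∏ j ∈ Finset.Icc 1 m, Real.cos (2 * kacNorm α m * eps α j * t) ^ 2 : ℝ) : ℂ) with hC
  set W : Fin (2*m+1) → ℂ := fun i => ∑ k : ER.Kc m, D k k * ER.zC (k i) with hW
  rw [ER.exp_ham, ER.exp_ham, ER.trace_main]
  have hL : ∀ i : Fin (2*m+1),
      (∑ s : ER.Kc m, Complex.exp ((-(Complex.I * (t:ℂ))) * ER.En α h m s) *
          Complex.exp ((Complex.I * (t:ℂ)) * ER.En α h m (ER.flp i s)) *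
          (hadamardU m * D * hadamardU m) (ER.flp i s) s)
        = ((2:ℂ)^(2*m+1) * C) * ((2:ℂ)⁻¹^(2*m+1) * W i) := by
    intro i
    have e1 : ∀ s : ER.Kc m,
        Complex.exp ((-(Complex.I * (t:ℂ))) * ER.En α h m s) *
          Complex.exp ((Complex.I * (t:ℂ)) * ER.En α h m (ER.flp i s)) *
          (hadamardU m * D * hadamardU m) (ER.flp i s) s
        = Complex.exp ((-(Complex.I * (t:ℂ))) * ER.En α h m s) *
          Complex.exp ((Complex.I * (t:ℂ)) * ER.En α h m (ER.flp i s)) *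
          ((2:ℂ)⁻¹^(2*m+1) * W i) := by
      intro s
      rw [ER.rho_entry D hD i s]
    rw [Finset.sum_congr rfl fun s _ => e1 s, ← Finset.sum_mul, ER.phase_sum α h t i, hC]
  rw [Finset.sum_congr rfl fun i _ => congrArg (((a i : ℝ):ℂ) * ·) (hL i)]
  have hR : Matrix.trace
      ((∑ i : Fin (2*m+1), ((a i : ℝ) : ℂ) • sigmaX m i) * (hadamardU m * D * hadamardU m))
      = ∑ i : Fin (2*m+1), ((a i : ℝ):ℂ) *
          (((2:ℂ)^(2*m+1)) * ((2:ℂ)⁻¹^(2*m+1) * W i)) := by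
    have hone : (∑ i : Fin (2*m+1), ((a i : ℝ) : ℂ) • sigmaX m i) * (hadamardU m * D * hadamardU m)
        = Matrix.diagonal (fun _ : ER.Kc m => (1:ℂ)) *
            (∑ i : Fin (2*m+1), ((a i : ℝ) : ℂ) • sigmaX m i) *
            Matrix.diagonal (fun _ : ER.Kc m => (1:ℂ)) * (hadamardU m * D * hadamardU m) := by
      rw [Matrix.diagonal_one, one_mul, mul_one]
    rw [hone, ER.trace_main]
    refine Finset.sum_congr rfl fun i _ => ?_
    congr 1
    have e1 : ∀ s : ER.Kc m,
        (1:ℂ) * 1 * (hadamardU m * D * hadamardU m) (ER.flp i s) s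
          = (2:ℂ)⁻¹^(2*m+1) * W i := by
      intro s
      rw [one_mul, one_mul, ER.rho_entry D hD i s]
    rw [Finset.sum_congr rfl fun s _ => e1 s, Finset.sum_const, Finset.card_univ]
    rw [Fintype.card_fun, Fintype.card_fin, Fintype.card_bool]
    rw [nsmul_eq_mul]
    push_cast
    ring
  rw [hR, Finset.mul_sum]
  refine Finset.sum_congr rfl fun i _ => ?_
  ring
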